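/- arXiv:1704.04779 — 5 statements merged into one kernel-verified Lean document; each statement's English description precedes it below -/
import Mathlib

section
/- Let z ≤ 0 be a real number and set w(z) = (3/2^(5/3))·(−i·y(z) + x(z) + 2/3) where x(z) = 4z/(z−1)² and y(z) = 4z(z+1)/(z−1)³. Then 2^(−5/3) ≤ |w(z)| ≤ 2^(−2/3). -/
/-- x-coordinate of the parametrization of the nodal cubic y² = x³ + x². -/
noncomputable def xnod (z : ℝ) : ℝ := 4 * z / (z - 1) ^ 2

/-- y-coordinate of the parametrization of the nodal cubic y² = x³ + x². -/
noncomputable def ynod (z : ℝ) : ℝ := 4 * z * (z + 1) / (z - 1) ^ 3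

/-- w(z) = (3/2^(5/3))·(−i·y(z) + x(z) + 2/3). -/
noncomputable def wnod (z : ℝ) : ℂ :=
  ((3 / 2 ^ ((5 : ℝ) / 3) : ℝ) : ℂ) * (-Complex.I * (ynod z : ℂ) + (xnod z : ℂ) + 2 / 3)

lemma Fbounds (z : ℝ) (hz : z ≤ 0) :
    1/9 ≤ (xnod z + 2/3)^2 + (ynod z)^2 ∧ (xnod z + 2/3)^2 + (ynod z)^2 ≤ 4/9 := by
  have hd : z - 1 ≠ 0 := ne_of_lt (by linarith)
  have h6 : (0:ℝ) < 9 * (z-1)^6 := by positivity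
  have key1 : (xnod z + 2/3)^2 + (ynod z)^2 - 1/9
      = (3*(z+1)^2*((z^2+4*z+1)^2+12*z^2)) / (9*(z-1)^6) := by
    unfold xnod ynod; field_simp; ring
  have key2 : 4/9 - ((xnod z + 2/3)^2 + (ynod z)^2)
      = (-48*z*((z^2+z)^2+5*(z+1/5)^2+4/5)) / (9*(z-1)^6) := by
    unfold xnod ynod; field_simp; ring
  have hn1 : (0:ℝ) ≤ (3*(z+1)^2*((z^2+4*z+1)^2+12*z^2)) / (9*(z-1)^6) := by positivity
  have hn2 : (0:ℝ) ≤ (-48*z*((z^2+z)^2+5*(z+1/5)^2+4/5)) / (9*(z-1)^6) := by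
    apply div_nonneg _ h6.le
    nlinarith [sq_nonneg (z^2+z), sq_nonneg (z+1/5)]
  constructor <;> linarith

theorem stmt_0 (z : ℝ) (hz : z ≤ 0) :
    (2 : ℝ) ^ (-(5 : ℝ) / 3) ≤ ‖wnod z‖ ∧
      ‖wnod z‖ ≤ (2 : ℝ) ^ (-(2 : ℝ) / 3) := by
  set c : ℝ := 3 / 2 ^ ((5 : ℝ) / 3) with hc
  have hcpos : 0 < c := by positivity
  have hw : wnod z = ((c * (xnod z + 2/3) : ℝ) : ℂ) + ((-(c * ynod z) : ℝ) : ℂ) * Complex.I := by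
    unfold wnod
    rw [show ((3 / 2 ^ ((5:ℝ)/3) : ℝ) : ℂ) = ((c:ℝ):ℂ) from by rw [hc]]
    push_cast
    ring
  have habs : ‖wnod z‖
      = Real.sqrt ((c * (xnod z + 2/3))^2 + (-(c * ynod z))^2) := by
    rw [hw, Complex.norm_add_mul_I]
  have hF := Fbounds z hz
  have hc2 : c^2 = 9 * (2:ℝ) ^ (-(10:ℝ)/3) := by
    rw [hc, div_pow, ← Real.rpow_natCast ((2:ℝ) ^ ((5:ℝ)/3)) 2,
      ← Real.rpow_mul (by norm_num : (0:ℝ) ≤ 2),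
      show (5:ℝ)/3 * ((2:ℕ):ℝ) = (10:ℝ)/3 by push_cast; ring,
      show (-(10:ℝ)/3) = -((10:ℝ)/3) by ring,
      Real.rpow_neg (by norm_num : (0:ℝ) ≤ 2), div_eq_mul_inv]
    norm_num
  have hS : (c * (xnod z + 2/3))^2 + (-(c * ynod z))^2
      = c^2 * ((xnod z + 2/3)^2 + (ynod z)^2) := by ring
  have hp10 : (0:ℝ) < (2:ℝ) ^ (-(10:ℝ)/3) := Real.rpow_pos_of_pos (by norm_num) _
  constructor
  · rw [habs]
    rw [show (2:ℝ) ^ (-(5:ℝ)/3) = Real.sqrt ((2:ℝ) ^ (-(10:ℝ)/3)) from ?_]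
    · apply Real.sqrt_le_sqrt
      rw [hS, hc2]
      nlinarith [hF.1, hp10]
    · rw [Real.sqrt_eq_rpow, ← Real.rpow_mul (by norm_num : (0:ℝ) ≤ 2)]
      norm_num
  · rw [habs]
    rw [show (2:ℝ) ^ (-(2:ℝ)/3) = Real.sqrt ((2:ℝ) ^ (-(4:ℝ)/3)) from ?_]
    · apply Real.sqrt_le_sqrt
      rw [hS, hc2]
      have h4 : (2:ℝ) ^ (-(4:ℝ)/3) = 4 * (2:ℝ) ^ (-(10:ℝ)/3) := by
        rw [show (-(4:ℝ)/3) = 2 + (-(10:ℝ)/3) by norm_num,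
          Real.rpow_add (by norm_num : (0:ℝ) < 2)]
        norm_num
      rw [h4]
      nlinarith [hF.2, hp10]
    · rw [Real.sqrt_eq_rpow, ← Real.rpow_mul (by norm_num : (0:ℝ) ≤ 2)]
      norm_num
end

section
/- Let n ≥ 1 be a natural number and c₁, c₂, c₃, c₄ ∈ ℂ. In the polynomial ring ℂ[u,v], the coefficient of the monomial uⁿvⁿ in (c₁ + c₂·u + c₃·u²v³ + c₄·u³v⁵)ⁿ equals Σ_{m,r ≥ 0, 5m+3r = n} n!/(((2m+r)!)²·m!·r!) · c₁^(2m+r)·c₂^(2m+r)·c₃^r·c₄^m. -/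
open MvPolynomial

lemma single_eq_aux (p q n : ℕ) :
    (Finsupp.single (0 : Fin 2) p + Finsupp.single (1 : Fin 2) q =
      Finsupp.single (0 : Fin 2) n + Finsupp.single (1 : Fin 2) n) ↔ p = n ∧ q = n := by
  constructor
  · intro h
    have h0 := DFunLike.congr_fun h 0
    have h1 := DFunLike.congr_fun h 1
    simp [Finsupp.single_apply] at h0 h1
    exact ⟨h0, h1⟩
  · rintro ⟨rfl, rfl⟩; rfl

theorem stmt_2 (n : ℕ) (hn : 1 ≤ n) (c₁ c₂ c₃ c₄ : ℂ) :
    MvPolynomial.coeff (Finsupp.single (0 : Fin 2) n + Finsupp.single (1 : Fin 2) n)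
      ((C c₁ + C c₂ * X 0 + C c₃ * X 0 ^ 2 * X 1 ^ 3 + C c₄ * X 0 ^ 3 * X 1 ^ 5 :
          MvPolynomial (Fin 2) ℂ) ^ n) =
    ∑ m ∈ Finset.range (n + 1), ∑ r ∈ Finset.range (n + 1),
      if 5 * m + 3 * r = n then
        (n.factorial : ℂ) /
            ((((2 * m + r).factorial) ^ 2 * m.factorial * r.factorial : ℕ) : ℂ) *
          c₁ ^ (2 * m + r) * c₂ ^ (2 * m + r) * c₃ ^ r * c₄ ^ m
      else 0 := by
  classical
  set f : Fin 4 → MvPolynomial (Fin 2) ℂ :=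
    ![C c₁, C c₂ * X 0, C c₃ * X 0 ^ 2 * X 1 ^ 3, C c₄ * X 0 ^ 3 * X 1 ^ 5] with hf
  have hexp : (C c₁ + C c₂ * X 0 + C c₃ * X 0 ^ 2 * X 1 ^ 3 + C c₄ * X 0 ^ 3 * X 1 ^ 5 :
      MvPolynomial (Fin 2) ℂ) = ∑ i : Fin 4, f i := by
    simp [hf, Fin.sum_univ_four]
  rw [hexp, Finset.sum_pow_eq_sum_piAntidiag, MvPolynomial.coeff_sum]
  have key : ∀ k ∈ Finset.piAntidiag (Finset.univ : Finset (Fin 4)) n,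
      MvPolynomial.coeff (Finsupp.single (0 : Fin 2) n + Finsupp.single (1 : Fin 2) n)
        ((Nat.multinomial Finset.univ k : MvPolynomial (Fin 2) ℂ) * ∏ i, f i ^ k i) =
      if k 1 + 2 * k 2 + 3 * k 3 = n ∧ 3 * k 2 + 5 * k 3 = n then
        (Nat.multinomial Finset.univ k : ℂ) *
          (c₁ ^ k 0 * c₂ ^ k 1 * c₃ ^ k 2 * c₄ ^ k 3) else 0 := by
    intro k _
    have hprod : ∏ i, f i ^ k i =
        C (c₁ ^ k 0 * c₂ ^ k 1 * c₃ ^ k 2 * c₄ ^ k 3) *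
          X 0 ^ (k 1 + 2 * k 2 + 3 * k 3) * X 1 ^ (3 * k 2 + 5 * k 3) := by
      simp only [Fin.prod_univ_four, hf, Matrix.cons_val_zero, Matrix.cons_val_one,
        Matrix.head_cons, Matrix.cons_val_two, Matrix.tail_cons, Matrix.cons_val_three,
        map_mul, map_pow]
      ring
    rw [hprod]
    rw [X_pow_eq_monomial, X_pow_eq_monomial]
    simp only [mul_assoc, monomial_mul, one_mul, ← C_eq_coe_nat, coeff_C_mul,
      coeff_monomial, single_eq_aux]
    split_ifs with h
    · ring
    · simp
  rw [Finset.sum_congr rfl key]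
  rw [Finset.sum_ite, Finset.sum_const_zero, add_zero]
  have hrhs : (∑ m ∈ Finset.range (n + 1), ∑ r ∈ Finset.range (n + 1),
      if 5 * m + 3 * r = n then
        (n.factorial : ℂ) /
            ((((2 * m + r).factorial) ^ 2 * m.factorial * r.factorial : ℕ) : ℂ) *
          c₁ ^ (2 * m + r) * c₂ ^ (2 * m + r) * c₃ ^ r * c₄ ^ m
      else 0) =
      ∑ p ∈ (Finset.range (n + 1) ×ˢ Finset.range (n + 1)).filter
          (fun p => 5 * p.1 + 3 * p.2 = n),
        (n.factorial : ℂ) /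
            ((((2 * p.1 + p.2).factorial) ^ 2 * p.1.factorial * p.2.factorial : ℕ) : ℂ) *
          c₁ ^ (2 * p.1 + p.2) * c₂ ^ (2 * p.1 + p.2) * c₃ ^ p.2 * c₄ ^ p.1 := by
    rw [Finset.sum_filter, ← Finset.sum_product']
  rw [hrhs]
  refine Finset.sum_nbij' (fun k => (k 3, k 2))
    (fun p => ![2 * p.1 + p.2, 2 * p.1 + p.2, p.2, p.1]) ?_ ?_ ?_ ?_ ?_
  · intro k hk
    simp only [Finset.mem_filter, Finset.mem_piAntidiag, Fin.sum_univ_four] at hk ⊢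
    simp only [Finset.mem_product, Finset.mem_range]
    omega
  · intro p hp
    simp only [Finset.mem_filter, Finset.mem_product, Finset.mem_range] at hp
    simp only [Finset.mem_filter, Finset.mem_piAntidiag, Fin.sum_univ_four,
      Matrix.cons_val_zero, Matrix.cons_val_one, Matrix.head_cons, Matrix.cons_val_two,
      Matrix.tail_cons, Matrix.cons_val_three]
    refine ⟨⟨by omega, fun i _ => Finset.mem_univ i⟩, by omega⟩
  · intro k hk
    simp only [Finset.mem_filter, Finset.mem_piAntidiag, Fin.sum_univ_four] at hk
    have e0 : 2 * k 3 + k 2 = k 0 := by omega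
    have e1 : 2 * k 3 + k 2 = k 1 := by omega
    funext i
    fin_cases i
    · exact e0
    · exact e1
    · rfl
    · rfl
  · intro p hp
    simp
  · intro k hk
    simp only [Finset.mem_filter, Finset.mem_piAntidiag, Fin.sum_univ_four] at hk
    obtain ⟨⟨hsum, -⟩, h1, h2⟩ := hk
    have hk0 : k 0 = 2 * k 3 + k 2 := by omega
    have hk1 : k 1 = 2 * k 3 + k 2 := by omega
    have hmn : (Nat.multinomial Finset.univ k : ℂ) =
        (n.factorial : ℂ) /
          ((((2 * k 3 + k 2).factorial) ^ 2 * (k 3).factorial * (k 2).factorial : ℕ) : ℂ) := by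
      have hspec := Nat.multinomial_spec (Finset.univ : Finset (Fin 4)) k
      rw [Fin.sum_univ_four, hsum, Fin.prod_univ_four, hk0, hk1] at hspec
      have hne : ((((2 * k 3 + k 2).factorial) ^ 2 * (k 3).factorial * (k 2).factorial : ℕ) : ℂ)
          ≠ 0 := by
        exact Nat.cast_ne_zero.mpr (by positivity)
      rw [eq_div_iff hne]
      rw [← Nat.cast_mul, ← hspec]
      push_cast
      ring
    rw [hmn, hk0, hk1]
    ring
end

section
/- Let n ≥ 1 be a natural number and c₀, c₁, c₂, c₄ ∈ ℂ. In the polynomial ring ℂ[u,v], the coefficient of the monomial uⁿvⁿ in (c₀·u²v² + c₁·u + c₂·u⁴v⁵ + c₄)ⁿ equals Σ_{m,r ≥ 0, 5m+2r = n} n!/((3m+r)!·r!·(m!)²) · c₀^r·c₁^m·c₂^m·c₄^(3m+r). -/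
open MvPolynomial

theorem stmt_3 (n : ℕ) (hn : 1 ≤ n) (c₀ c₁ c₂ c₄ : ℂ) :
    MvPolynomial.coeff (Finsupp.single (0 : Fin 2) n + Finsupp.single (1 : Fin 2) n)
      ((C c₀ * X 0 ^ 2 * X 1 ^ 2 + C c₁ * X 0 + C c₂ * X 0 ^ 4 * X 1 ^ 5 + C c₄ :
          MvPolynomial (Fin 2) ℂ) ^ n) =
    ∑ m ∈ Finset.range (n + 1), ∑ r ∈ Finset.range (n + 1),
      if 5 * m + 2 * r = n then
        (n.factorial : ℂ) /
            (((3 * m + r).factorial * r.factorial * (m.factorial) ^ 2 : ℕ) : ℂ) *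
          c₀ ^ r * c₁ ^ m * c₂ ^ m * c₄ ^ (3 * m + r)
      else 0 := by
  classical
  open Finset in
  have hP : (C c₀ * X 0 ^ 2 * X 1 ^ 2 + C c₁ * X 0 + C c₂ * X 0 ^ 4 * X 1 ^ 5 + C c₄ :
      MvPolynomial (Fin 2) ℂ) =
      ∑ i : Fin 4, monomial (![Finsupp.single 0 2 + Finsupp.single 1 2, Finsupp.single 0 1,
        Finsupp.single 0 4 + Finsupp.single 1 5, 0] i) (![c₀, c₁, c₂, c₄] i) := by
    rw [Fin.sum_univ_four]
    simp only [Matrix.cons_val_zero, Matrix.cons_val_one, Matrix.head_cons, Matrix.cons_val_two,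
      Matrix.tail_cons, Matrix.cons_val_three]
    simp only [X_pow_eq_monomial, X, monomial_pow, one_pow, Finsupp.smul_single, smul_eq_mul,
      mul_one, monomial_mul, C_mul_monomial, C_apply, zero_add]
  have step1 : MvPolynomial.coeff (Finsupp.single (0 : Fin 2) n + Finsupp.single (1 : Fin 2) n)
      ((C c₀ * X 0 ^ 2 * X 1 ^ 2 + C c₁ * X 0 + C c₂ * X 0 ^ 4 * X 1 ^ 5 + C c₄ :
          MvPolynomial (Fin 2) ℂ) ^ n) =
      ∑ k ∈ piAntidiag (univ : Finset (Fin 4)) n,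
        if k 0 • (Finsupp.single (0 : Fin 2) 2 + Finsupp.single 1 2) + k 1 • Finsupp.single 0 1
            + k 2 • (Finsupp.single 0 4 + Finsupp.single 1 5) + k 3 • (0 : Fin 2 →₀ ℕ)
            = Finsupp.single (0 : Fin 2) n + Finsupp.single (1 : Fin 2) n then
          (Nat.multinomial univ k : ℂ) * (c₀ ^ k 0 * c₁ ^ k 1 * c₂ ^ k 2 * c₄ ^ k 3)
        else 0 := by
    rw [hP, Finset.sum_pow_eq_sum_piAntidiag, coeff_sum]
    refine Finset.sum_congr rfl fun k hk => ?_
    simp only [monomial_pow, Fin.prod_univ_four, monomial_mul, ← C_eq_coe_nat, coeff_C_mul,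
      coeff_monomial, mul_ite, mul_zero, Matrix.cons_val_zero, Matrix.cons_val_one,
      Matrix.head_cons, Matrix.cons_val_two, Matrix.tail_cons, Matrix.cons_val_three]
  rw [step1, ← Finset.sum_product', ← Finset.sum_filter, ← Finset.sum_filter]
  refine Finset.sum_nbij' (fun k => (k 1, k 0)) (fun p => ![p.2, p.1, p.1, 3 * p.1 + p.2])
    ?_ ?_ ?_ ?_ ?_
  · intro k hk
    simp only [mem_filter, mem_piAntidiag, mem_coe, Finset.mem_univ, Fin.sum_univ_four] at hk
    obtain ⟨⟨hsum, -⟩, heq⟩ := hk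
    have h0 := congrArg (fun f => f 0) heq
    have h1 := congrArg (fun f => f 1) heq
    simp [Finsupp.single_apply] at h0 h1
    simp only [mem_filter, mem_product, mem_range]
    omega
  · intro p hp
    simp only [mem_filter, mem_product, mem_range] at hp
    obtain ⟨⟨hm, hr⟩, heq⟩ := hp
    simp only [mem_filter, mem_piAntidiag, Finset.mem_univ, Fin.sum_univ_four]
    refine ⟨⟨?_, fun _ _ => trivial⟩, ?_⟩
    · simp [Matrix.cons_val_zero, Matrix.cons_val_one]; omega
    · ext j
      simp only [Matrix.cons_val_zero, Matrix.cons_val_one, Matrix.head_cons, Matrix.cons_val_two,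
        Matrix.tail_cons, Matrix.cons_val_three, Finsupp.coe_add, Finsupp.coe_smul, Pi.add_apply,
        Pi.smul_apply, Finsupp.single_apply, smul_eq_mul, Finsupp.coe_zero, Pi.zero_apply]
      fin_cases j <;> simp <;> omega
  · intro k hk
    simp only [mem_filter, mem_piAntidiag, Finset.mem_univ, Fin.sum_univ_four] at hk
    obtain ⟨⟨hsum, -⟩, heq⟩ := hk
    have h0 := congrArg (fun f => f 0) heq
    have h1 := congrArg (fun f => f 1) heq
    simp [Finsupp.single_apply] at h0 h1
    funext i
    fin_cases i <;> simp <;> omega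
  · intro p hp
    simp
  · intro k hk
    simp only [mem_filter, mem_piAntidiag, Finset.mem_univ, Fin.sum_univ_four] at hk
    obtain ⟨⟨hsum, -⟩, heq⟩ := hk
    have h0 := congrArg (fun f => f 0) heq
    have h1 := congrArg (fun f => f 1) heq
    simp [Finsupp.single_apply] at h0 h1
    have hk2 : k 2 = k 1 := by omega
    have hk3 : k 3 = 3 * k 1 + k 0 := by omega
    have hD : (((3 * k 1 + k 0).factorial * (k 0).factorial * ((k 1).factorial) ^ 2 : ℕ) : ℂ)
        ≠ 0 := Nat.cast_ne_zero.2 (by positivity)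
    have spec := Nat.multinomial_spec (univ : Finset (Fin 4)) k
    rw [Fin.prod_univ_four, Fin.sum_univ_four, hk2, hk3,
      show k 0 + k 1 + k 1 + (3 * k 1 + k 0) = n by omega] at spec
    have specC := congrArg (Nat.cast : ℕ → ℂ) spec
    push_cast at specC
    have hmul : (Nat.multinomial univ k : ℂ) =
        (n.factorial : ℂ) /
          (((3 * k 1 + k 0).factorial * (k 0).factorial * ((k 1).factorial) ^ 2 : ℕ) : ℂ) := by
      rw [eq_div_iff hD]
      push_cast
      linear_combination specC
    rw [hk2, hk3, hmul]
    ring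
end

section
/- Let ε ∈ (0,1) and x₀, x₃ ∈ ℂ satisfy |x₀|·ε² + ε⁻¹ + ε⁷ + ε⁻² < |x₃|. Then (1/(2πi)²)·∮_{|u|=ε} u⁻¹·( ∮_{|v|=ε} v⁻¹·Log(1 + (x₀·u·v + v⁻¹ + u³v⁴ + u⁻¹v⁻¹)/x₃) dv ) du = −Σ_{(m,r)∈ℕ², (m,r)≠(0,0)} (5m+2r)!/((3m+r)!·r!·(m!)²·(5m+2r)) · (−x₃⁻⁵)^m · (x₀/x₃²)^r, where the double series on the right converges absolutely. -/
/-- The (m,r)-term of the double series in §6, eq. (2C), with indices p = (m, r). -/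
noncomputable def term5 (x₀ x₃ : ℂ) (p : ℕ × ℕ) : ℂ :=
  if p = (0, 0) then 0
  else
    ((5 * p.1 + 2 * p.2).factorial : ℂ) /
        (((3 * p.1 + p.2).factorial * p.2.factorial * (p.1.factorial) ^ 2 *
            (5 * p.1 + 2 * p.2) : ℕ) : ℂ) *
      (-(x₃ ^ 5)⁻¹) ^ p.1 * (x₀ / x₃ ^ 2) ^ p.2

namespace Stmt5Aux

open Complex Finset Metric Filter

/-! ### Combinatorial lemmas -/

lemma natfact (m r : ℕ) :
    Nat.choose (5*m+2*r) (m+r) * Nat.choose (m+r) m * Nat.choose (4*m+r) m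
      * ((3*m+r).factorial * r.factorial * m.factorial * m.factorial)
      = (5*m+2*r).factorial := by
  have h1 := Nat.choose_mul_factorial_mul_factorial (show m ≤ 4*m+r by omega)
  rw [show 4*m+r - m = 3*m+r by omega] at h1
  have h2 := Nat.choose_mul_factorial_mul_factorial (show m ≤ m+r by omega)
  rw [show m+r - m = r by omega] at h2
  have h3 := Nat.choose_mul_factorial_mul_factorial (show m+r ≤ 5*m+2*r by omega)
  rw [show 5*m+2*r - (m+r) = 4*m+r by omega] at h3
  rw [← h3, ← h2, ← h1]; ring

lemma natfact' (m r : ℕ) :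
    Nat.choose (5*m+2*r) r * Nat.choose (5*m+r) m * Nat.choose (4*m+r) m
      * ((3*m+r).factorial * r.factorial * m.factorial * m.factorial)
      = (5*m+2*r).factorial := by
  have h1 := Nat.choose_mul_factorial_mul_factorial (show m ≤ 4*m+r by omega)
  rw [show 4*m+r - m = 3*m+r by omega] at h1
  have h2 := Nat.choose_mul_factorial_mul_factorial (show m ≤ 5*m+r by omega)
  rw [show 5*m+r - m = 4*m+r by omega] at h2
  have h3 := Nat.choose_mul_factorial_mul_factorial (show r ≤ 5*m+2*r by omega)
  rw [show 5*m+2*r - r = 5*m+r by omega] at h3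
  rw [← h3, ← h2, ← h1]; ring

lemma binom_le {X Y : ℝ} (hX : 0 ≤ X) (hY : 0 ≤ Y) {p n : ℕ} (h : p ≤ n) :
    (Nat.choose n p : ℝ) * X^p * Y^(n-p) ≤ (X+Y)^n := by
  calc (Nat.choose n p : ℝ) * X^p * Y^(n-p) = X^p * Y^(n-p) * Nat.choose n p := by ring
    _ ≤ ∑ i ∈ Finset.range (n+1), X^i * Y^(n-i) * Nat.choose n i := by
        refine Finset.single_le_sum (f := fun i => X^i * Y^(n-i) * (Nat.choose n i : ℝ))
          (fun i _ => by positivity) (by simp [Nat.lt_succ_iff, h])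
    _ = (X+Y)^n := (add_pow X Y n).symm

lemma multinom4_le {A B C D : ℝ} (hA : 0 ≤ A) (hB : 0 ≤ B) (hC : 0 ≤ C) (hD : 0 ≤ D)
    (m r : ℕ) :
    (Nat.choose (5*m+2*r) r * Nat.choose (5*m+r) m * Nat.choose (4*m+r) m : ℝ)
      * (A^r * B^m * C^m * D^(3*m+r)) ≤ (A+B+C+D)^(5*m+2*r) := by
  have h1 : (Nat.choose (4*m+r) m : ℝ) * C^m * D^(3*m+r) ≤ (C+D)^(4*m+r) := by
    have := binom_le hC hD (show m ≤ 4*m+r by omega)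
    rwa [show 4*m+r - m = 3*m+r by omega] at this
  have h2 : (Nat.choose (5*m+r) m : ℝ) * B^m * (C+D)^(4*m+r) ≤ (B+(C+D))^(5*m+r) := by
    have := binom_le (Y := C+D) hB (by positivity) (show m ≤ 5*m+r by omega)
    rwa [show 5*m+r - m = 4*m+r by omega] at this
  have h3 : (Nat.choose (5*m+2*r) r : ℝ) * A^r * (B+(C+D))^(5*m+r) ≤ (A+(B+(C+D)))^(5*m+2*r) := by
    have := binom_le (Y := B+(C+D)) hA (by positivity) (show r ≤ 5*m+2*r by omega)
    rwa [show 5*m+2*r - r = 5*m+r by omega] at this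
  calc (Nat.choose (5*m+2*r) r * Nat.choose (5*m+r) m * Nat.choose (4*m+r) m : ℝ)
        * (A^r * B^m * C^m * D^(3*m+r))
      = ((Nat.choose (5*m+2*r) r : ℝ) * A^r) * (((Nat.choose (5*m+r) m : ℝ) * B^m)
          * ((Nat.choose (4*m+r) m : ℝ) * C^m * D^(3*m+r))) := by ring
    _ ≤ ((Nat.choose (5*m+2*r) r : ℝ) * A^r) * (((Nat.choose (5*m+r) m : ℝ) * B^m)
          * (C+D)^(4*m+r)) := by
        refine mul_le_mul_of_nonneg_left (mul_le_mul_of_nonneg_left h1 (by positivity))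
          (by positivity)
    _ = ((Nat.choose (5*m+2*r) r : ℝ) * A^r) * ((Nat.choose (5*m+r) m : ℝ) * B^m
          * (C+D)^(4*m+r)) := by ring
    _ ≤ ((Nat.choose (5*m+2*r) r : ℝ) * A^r) * (B+(C+D))^(5*m+r) :=
        mul_le_mul_of_nonneg_left h2 (by positivity)
    _ = (Nat.choose (5*m+2*r) r : ℝ) * A^r * (B+(C+D))^(5*m+r) := by ring
    _ ≤ (A+(B+(C+D)))^(5*m+2*r) := h3
    _ = (A+B+C+D)^(5*m+2*r) := by ring_nf

/-! ### Circle-integral helper lemmas -/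

lemma sphere_ne_zero {ε : ℝ} (hε : 0 < ε) {z : ℂ} (hz : z ∈ sphere (0:ℂ) ε) : z ≠ 0 := by
  rw [mem_sphere_zero_iff_norm] at hz
  intro h
  rw [h, norm_zero] at hz
  exact hε.ne hz

lemma contOn_sum {ι : Type*} (s : Finset ι) {F : ι → ℂ → ℂ} {t : Set ℂ}
    (h : ∀ i ∈ s, ContinuousOn (F i) t) :
    ContinuousOn (fun z => ∑ i ∈ s, F i z) t := by
  induction s using Finset.cons_induction with
  | empty => simpa using continuousOn_const
  | cons a s ha ih =>
      simp only [Finset.sum_cons]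
      exact (h a (Finset.mem_cons_self _ _)).add (ih fun i hi => h i (Finset.mem_cons.2 (Or.inr hi)))

lemma contOn_zpow {ε : ℝ} (hε : 0 < ε) (n : ℤ) :
    ContinuousOn (fun z : ℂ => z ^ n) (sphere (0:ℂ) ε) := fun z hz =>
  (continuousAt_zpow₀ z n (Or.inl (sphere_ne_zero hε hz))).continuousWithinAt

lemma circleIntegral_zpow {R : ℝ} (hR : 0 < R) (n : ℤ) :
    (∮ z in C((0:ℂ), R), z ^ n) = if n = -1 then 2 * Real.pi * Complex.I else 0 := by
  split_ifs with hn
  · subst hn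
    have := circleIntegral.integral_sub_inv_of_mem_ball (c := (0:ℂ)) (R := R) (w := 0)
      (Metric.mem_ball_self hR)
    simpa [zpow_neg_one] using this
  · have := circleIntegral.integral_sub_zpow_of_ne hn 0 0 R
    simpa using this

lemma circleIntegral_finset_sum {ι : Type*} (s : Finset ι) {F : ι → ℂ → ℂ} {c : ℂ} {R : ℝ}
    (hR : 0 ≤ R) (h : ∀ i ∈ s, ContinuousOn (F i) (sphere c R)) :
    (∮ z in C(c, R), ∑ i ∈ s, F i z) = ∑ i ∈ s, ∮ z in C(c, R), F i z := by
  simp only [circleIntegral, Finset.smul_sum]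
  rw [intervalIntegral.integral_finset_sum]
  intro i hi
  have hcont : Continuous fun θ : ℝ => deriv (circleMap c R) θ • F i (circleMap c R θ) := by
    simp only [deriv_circleMap]
    exact ((continuous_circleMap 0 R).mul continuous_const).smul
      ((h i hi).comp_continuous (continuous_circleMap c R) (circleMap_mem_sphere c hR))
  exact hcont.intervalIntegrable _ _

lemma hasSum_circleIntegral {F : ℕ → ℂ → ℂ} {G : ℂ → ℂ} {R C ρ : ℝ} (hR : 0 < R)
    (hcont : ∀ k, ContinuousOn (F k) (sphere (0:ℂ) R))
    (hρ0 : 0 ≤ ρ) (hρ1 : ρ < 1)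
    (hbound : ∀ k, ∀ z ∈ sphere (0:ℂ) R, ‖F k z‖ ≤ C * ρ^k)
    (hsum : ∀ z ∈ sphere (0:ℂ) R, HasSum (fun k => F k z) (G z)) :
    HasSum (fun k => ∮ z in C(0, R), F k z) (∮ z in C(0, R), G z) := by
  simp only [circleIntegral]
  refine intervalIntegral.hasSum_integral_of_dominated_convergence
    (fun k _ => R * (C * ρ^k)) (fun k => ?_) (fun k => ?_) ?_ ?_ ?_
  · have hcont' : Continuous fun θ : ℝ => deriv (circleMap 0 R) θ • F k (circleMap 0 R θ) := by
      simp only [deriv_circleMap]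
      exact ((continuous_circleMap 0 R).mul continuous_const).smul
        ((hcont k).comp_continuous (continuous_circleMap 0 R) (circleMap_mem_sphere 0 hR.le))
    exact hcont'.aestronglyMeasurable
  · refine Filter.Eventually.of_forall fun θ _ => ?_
    rw [norm_smul]
    have h1 : ‖deriv (circleMap 0 R) θ‖ = R := by
      simp [deriv_circleMap, norm_mul, norm_circleMap_zero, abs_of_pos hR]
    rw [h1]
    exact mul_le_mul_of_nonneg_left
      (hbound k _ (circleMap_mem_sphere 0 hR.le θ)) hR.le
  · exact Filter.Eventually.of_forall fun θ _ =>
      (((summable_geometric_of_lt_one hρ0 hρ1).mul_left C).mul_left R)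
  · exact intervalIntegrable_const
  · exact Filter.Eventually.of_forall fun θ _ =>
      (hsum _ (circleMap_mem_sphere 0 hR.le θ)).const_smul _

/-! ### The Laurent expansion and the integral evaluations -/

noncomputable def S5 (x₀ x₃ : ℂ) (k : ℕ) (u : ℂ) : ℂ :=
  ∑ j ∈ range (k+1), ∑ m ∈ range (k+1), ∑ i ∈ range (k+1),
    ((Nat.choose k j * Nat.choose j m * Nat.choose (k-j) i : ℕ) : ℂ) * x₀^(j-m) * (x₃⁻¹)^k *
      u ^ (((i+2*j+2*m : ℕ) : ℤ) - ((k:ℕ):ℤ)) *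
      (if ((2*j+3*m : ℕ) : ℤ) - ((k+1 : ℕ) : ℤ) = -1 then (2*(Real.pi:ℂ)*Complex.I) else 0)

noncomputable def T5 (x₀ x₃ : ℂ) (k : ℕ) : ℂ :=
  ∑ j ∈ range (k+1), ∑ m ∈ range (k+1), ∑ i ∈ range (k+1),
    ((Nat.choose k j * Nat.choose j m * Nat.choose (k-j) i : ℕ) : ℂ) * x₀^(j-m) * (x₃⁻¹)^k *
      (if (((i+2*j+2*m : ℕ) : ℤ) - ((k:ℕ):ℤ)) - 1 = -1 then (2*(Real.pi:ℂ)*Complex.I) else 0) *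
      (if ((2*j+3*m : ℕ) : ℤ) - ((k+1 : ℕ) : ℤ) = -1 then (2*(Real.pi:ℂ)*Complex.I) else 0)

def A5 (k : ℕ) : Finset (ℕ × ℕ) :=
  (range (k+1) ×ˢ range (k+1)).filter (fun p => 5*p.1+2*p.2 = k)

lemma zpow_natsub (u : ℂ) (hu : u ≠ 0) (p q : ℕ) :
    u ^ ((p:ℤ) - (q:ℤ)) = u^p * (u^q)⁻¹ := by
  rw [zpow_sub₀ hu, zpow_natCast, zpow_natCast, div_eq_mul_inv]

lemma expand (x₀ x₃ : ℂ) (hx₃ : x₃ ≠ 0) (k : ℕ) {u v : ℂ} (hu : u ≠ 0) (hv : v ≠ 0) :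
    v⁻¹ * ((x₀*u*v + v⁻¹ + u^3*v^4 + u⁻¹*v⁻¹)/x₃)^k
    = ∑ j ∈ range (k+1), ∑ m ∈ range (k+1), ∑ i ∈ range (k+1),
        ((Nat.choose k j * Nat.choose j m * Nat.choose (k-j) i : ℕ) : ℂ) * x₀^(j-m) * (x₃⁻¹)^k *
          u ^ (((i+2*j+2*m : ℕ) : ℤ) - ((k:ℕ):ℤ)) * v ^ (((2*j+3*m : ℕ) : ℤ) - ((k+1 : ℕ) : ℤ)) := by
  have hfact : (x₀*u*v + v⁻¹ + u^3*v^4 + u⁻¹*v⁻¹)/x₃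
      = x₃⁻¹ * u⁻¹ * v⁻¹ * ((u^2*v^2*(u^2*v^3 + x₀)) + (u + 1)) := by
    field_simp; ring
  rw [hfact, mul_pow, mul_pow, mul_pow, add_pow (u^2*v^2*(u^2*v^3 + x₀)) (u+1) k]
  simp only [Finset.mul_sum]
  refine Finset.sum_congr rfl fun j hj => ?_
  rw [Finset.mem_range] at hj
  have hjk : j ≤ k := by omega
  have hshrink : ∀ m ∈ range (k+1),
      (∑ i ∈ range (k+1),
        ((Nat.choose k j * Nat.choose j m * Nat.choose (k-j) i : ℕ) : ℂ) * x₀^(j-m) * (x₃⁻¹)^k *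
          u ^ (((i+2*j+2*m : ℕ) : ℤ) - ((k:ℕ):ℤ)) * v ^ (((2*j+3*m : ℕ) : ℤ) - ((k+1 : ℕ) : ℤ)))
      = ∑ i ∈ range (k-j+1),
        ((Nat.choose k j * Nat.choose j m * Nat.choose (k-j) i : ℕ) : ℂ) * x₀^(j-m) * (x₃⁻¹)^k *
          u ^ (((i+2*j+2*m : ℕ) : ℤ) - ((k:ℕ):ℤ)) * v ^ (((2*j+3*m : ℕ) : ℤ) - ((k+1 : ℕ) : ℤ)) := by
    intro m _
    refine (Finset.sum_subset (Finset.range_subset_range.2 (by omega)) fun i _ hi => ?_).symm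
    rw [Finset.mem_range, not_lt] at hi
    have : Nat.choose (k-j) i = 0 := Nat.choose_eq_zero_of_lt (by omega)
    simp [this]
  rw [Finset.sum_congr rfl hshrink]
  have hshrink2 :
      (∑ m ∈ range (k+1), ∑ i ∈ range (k-j+1),
        ((Nat.choose k j * Nat.choose j m * Nat.choose (k-j) i : ℕ) : ℂ) * x₀^(j-m) * (x₃⁻¹)^k *
          u ^ (((i+2*j+2*m : ℕ) : ℤ) - ((k:ℕ):ℤ)) * v ^ (((2*j+3*m : ℕ) : ℤ) - ((k+1 : ℕ) : ℤ)))
      = ∑ m ∈ range (j+1), ∑ i ∈ range (k-j+1),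
        ((Nat.choose k j * Nat.choose j m * Nat.choose (k-j) i : ℕ) : ℂ) * x₀^(j-m) * (x₃⁻¹)^k *
          u ^ (((i+2*j+2*m : ℕ) : ℤ) - ((k:ℕ):ℤ)) * v ^ (((2*j+3*m : ℕ) : ℤ) - ((k+1 : ℕ) : ℤ)) := by
    refine (Finset.sum_subset (Finset.range_subset_range.2 (by omega)) fun m _ hm => ?_).symm
    rw [Finset.mem_range, not_lt] at hm
    have : Nat.choose j m = 0 := Nat.choose_eq_zero_of_lt (by omega)
    refine Finset.sum_eq_zero fun i _ => by simp [this]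
  rw [hshrink2]
  rw [mul_pow (u^2*v^2) (u^2*v^3 + x₀) j, add_pow (u^2*v^3) x₀ j, add_pow u 1 (k-j)]
  simp only [one_pow, Finset.sum_mul, Finset.mul_sum]
  rw [Finset.sum_comm]
  refine Finset.sum_congr rfl fun m hm => ?_
  refine Finset.sum_congr rfl fun i hi => ?_
  rw [zpow_natsub u hu, zpow_natsub v hv]
  push_cast
  simp only [← inv_pow]
  ring

lemma inner_eval (x₀ x₃ : ℂ) (hx₃ : x₃ ≠ 0) {ε : ℝ} (hε : 0 < ε) (k : ℕ) {u : ℂ} (hu : u ≠ 0) :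
    (∮ v in C((0:ℂ), ε), v⁻¹ * ((x₀*u*v + v⁻¹ + u^3*v^4 + u⁻¹*v⁻¹)/x₃)^k) = S5 x₀ x₃ k u := by
  have hcongr : Set.EqOn (fun v : ℂ => v⁻¹ * ((x₀*u*v + v⁻¹ + u^3*v^4 + u⁻¹*v⁻¹)/x₃)^k)
      (fun v : ℂ => ∑ j ∈ range (k+1), ∑ m ∈ range (k+1), ∑ i ∈ range (k+1),
        ((Nat.choose k j * Nat.choose j m * Nat.choose (k-j) i : ℕ) : ℂ) * x₀^(j-m) * (x₃⁻¹)^k *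
          u ^ (((i+2*j+2*m : ℕ) : ℤ) - ((k:ℕ):ℤ)) * v ^ (((2*j+3*m : ℕ) : ℤ) - ((k+1 : ℕ) : ℤ)))
      (sphere (0:ℂ) ε) := fun v hv => expand x₀ x₃ hx₃ k hu (sphere_ne_zero hε hv)
  rw [circleIntegral.integral_congr hε.le hcongr]
  have hterm : ∀ (c : ℂ) (n : ℤ), ContinuousOn (fun v : ℂ => c * v ^ n) (sphere (0:ℂ) ε) :=
    fun c n => continuousOn_const.mul (contOn_zpow hε n)
  rw [circleIntegral_finset_sum _ hε.le (fun j _ => contOn_sum _ (fun m _ => contOn_sum _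
    (fun i _ => hterm _ _)))]
  refine Finset.sum_congr rfl fun j _ => ?_
  rw [circleIntegral_finset_sum _ hε.le (fun m _ => contOn_sum _ (fun i _ => hterm _ _))]
  refine Finset.sum_congr rfl fun m _ => ?_
  rw [circleIntegral_finset_sum _ hε.le (fun i _ => hterm _ _)]
  refine Finset.sum_congr rfl fun i _ => ?_
  rw [circleIntegral.integral_const_mul, circleIntegral_zpow hε]

lemma outer_eval (x₀ x₃ : ℂ) (a : ℂ) {ε : ℝ} (hε : 0 < ε) (k : ℕ) :
    (∮ u in C((0:ℂ), ε), u⁻¹ * (a * S5 x₀ x₃ k u)) = a * T5 x₀ x₃ k := by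
  have hcongr : Set.EqOn (fun u : ℂ => u⁻¹ * (a * S5 x₀ x₃ k u))
      (fun u : ℂ => ∑ j ∈ range (k+1), ∑ m ∈ range (k+1), ∑ i ∈ range (k+1),
        (a * (((Nat.choose k j * Nat.choose j m * Nat.choose (k-j) i : ℕ) : ℂ) * x₀^(j-m) *
          (x₃⁻¹)^k *
          (if ((2*j+3*m : ℕ) : ℤ) - ((k+1 : ℕ) : ℤ) = -1 then (2*(Real.pi:ℂ)*Complex.I) else 0))) *
          u ^ ((((i+2*j+2*m : ℕ) : ℤ) - ((k:ℕ):ℤ)) - 1))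
      (sphere (0:ℂ) ε) := by
    intro u hu
    have hu0 := sphere_ne_zero hε hu
    simp only [S5, Finset.mul_sum]
    refine Finset.sum_congr rfl fun j _ => ?_
    refine Finset.sum_congr rfl fun m _ => ?_
    refine Finset.sum_congr rfl fun i _ => ?_
    rw [zpow_sub_one₀ hu0]
    ring
  rw [circleIntegral.integral_congr hε.le hcongr]
  have hterm : ∀ (c : ℂ) (n : ℤ), ContinuousOn (fun v : ℂ => c * v ^ n) (sphere (0:ℂ) ε) :=
    fun c n => continuousOn_const.mul (contOn_zpow hε n)
  rw [circleIntegral_finset_sum _ hε.le (fun j _ => contOn_sum _ (fun m _ => contOn_sum _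
    (fun i _ => hterm _ _)))]
  rw [T5, Finset.mul_sum]
  refine Finset.sum_congr rfl fun j _ => ?_
  rw [circleIntegral_finset_sum _ hε.le (fun m _ => contOn_sum _ (fun i _ => hterm _ _)),
    Finset.mul_sum]
  refine Finset.sum_congr rfl fun m _ => ?_
  rw [circleIntegral_finset_sum _ hε.le (fun i _ => hterm _ _), Finset.mul_sum]
  refine Finset.sum_congr rfl fun i _ => ?_
  rw [circleIntegral.integral_const_mul, circleIntegral_zpow hε]
  by_cases hcond : ((((i+2*j+2*m : ℕ) : ℤ) - ((k:ℕ):ℤ)) - 1) = -1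
  · rw [if_pos hcond]; ring
  · rw [if_neg hcond]; ring

lemma stepE (x₀ x₃ : ℂ) (k : ℕ) :
    ((-1:ℂ)^(k+1)/(k:ℂ)) * T5 x₀ x₃ k
      = -(2*(Real.pi:ℂ)*Complex.I)^2 * ∑ p ∈ A5 k, term5 x₀ x₃ p := by
  rw [T5]
  simp only [Finset.mul_sum]
  rw [← Finset.sum_product', ← Finset.sum_product']
  rw [← Finset.sum_filter_of_ne (p := fun q : (ℕ × ℕ) × ℕ =>
      2*q.1.1+3*q.1.2 = k ∧ q.2+2*q.1.1+2*q.1.2 = k ∧ q.1.2 ≤ q.1.1) ?side]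
  swap
  · rintro ⟨⟨j, m⟩, i⟩ hq hne
    dsimp only at hne ⊢
    refine ⟨?_, ?_, ?_⟩
    · by_contra hc
      apply hne
      have : ¬ (((2*j+3*m : ℕ) : ℤ) - ((k+1 : ℕ) : ℤ) = -1) := by push_cast; omega
      rw [if_neg this]
      ring
    · by_contra hc
      apply hne
      have : ¬ ((((i+2*j+2*m : ℕ) : ℤ) - ((k:ℕ):ℤ)) - 1 = -1) := by push_cast; omega
      rw [if_neg this]
      ring
    · by_contra hc
      apply hne
      have : Nat.choose j m = 0 := Nat.choose_eq_zero_of_lt (by omega)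
      simp [this]
  refine Finset.sum_nbij' (fun q => (q.1.2, q.1.1 - q.1.2)) (fun p => ((p.1 + p.2, p.1), p.1))
    ?_ ?_ ?_ ?_ ?_
  · rintro ⟨⟨j, m⟩, i⟩ hq
    obtain ⟨hmem, h1, h2, h3⟩ := Finset.mem_filter.1 hq
    dsimp only at h1 h2 h3
    simp only [Finset.mem_product, Finset.mem_range] at hmem
    simp only [A5, Finset.mem_filter, Finset.mem_product, Finset.mem_range]
    refine ⟨⟨?_, ?_⟩, ?_⟩ <;> omega
  · rintro ⟨m, r⟩ hp
    simp only [A5, Finset.mem_filter, Finset.mem_product, Finset.mem_range] at hp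
    obtain ⟨⟨hm, hr⟩, h1⟩ := hp
    simp only [Finset.mem_filter, Finset.mem_product, Finset.mem_range]
    refine ⟨⟨⟨?_, ?_⟩, ?_⟩, ?_, ?_, ?_⟩ <;> omega
  · rintro ⟨⟨j, m⟩, i⟩ hq
    obtain ⟨hmem, h1, h2, h3⟩ := Finset.mem_filter.1 hq
    dsimp only at h1 h2 h3 ⊢
    refine Prod.ext (Prod.ext ?_ ?_) ?_ <;> simp <;> omega
  · rintro ⟨m, r⟩ hp
    dsimp only
    refine Prod.ext ?_ ?_ <;> simp
  · rintro ⟨⟨j, m⟩, i⟩ hq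
    obtain ⟨hmem, h1, h2, h3⟩ := Finset.mem_filter.1 hq
    dsimp only at h1 h2 h3
    obtain ⟨r, rfl⟩ : ∃ r, j = m + r := ⟨j - m, by omega⟩
    have him : m = i := by omega
    subst him
    have hk : k = 5*m+2*r := by omega
    subst hk
    dsimp only
    rw [if_pos (by push_cast; omega), if_pos (by push_cast; omega)]
    rw [show 5*m+2*r - (m+r) = 4*m+r by omega, show m+r-m = r by omega]
    by_cases hmr : m = 0 ∧ r = 0
    · obtain ⟨rfl, rfl⟩ := hmr
      simp [term5]
    · have hk0 : (5*m+2*r) ≠ 0 := by omega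
      rw [term5, if_neg (by simp only [Prod.mk.injEq]; tauto)]
      have hfrac : (((5*m+2*r).factorial : ℕ) : ℂ) /
          ((((3*m+r).factorial * r.factorial * (m.factorial)^2 * (5*m+2*r)) : ℕ) : ℂ)
          = ((Nat.choose (5*m+2*r) (m+r) * Nat.choose (m+r) m * Nat.choose (4*m+r) m : ℕ) : ℂ)
            / ((5*m+2*r : ℕ) : ℂ) := by
        have hd : (((3*m+r).factorial * r.factorial * (m.factorial)^2 * (5*m+2*r)) : ℕ) ≠ 0 :=
          mul_ne_zero (mul_ne_zero (mul_ne_zero (3*m+r).factorial_ne_zero r.factorial_ne_zero)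
            (pow_ne_zero 2 m.factorial_ne_zero)) hk0
        rw [div_eq_div_iff (Nat.cast_ne_zero.2 hd) (Nat.cast_ne_zero.2 hk0)]
        norm_cast
        rw [← natfact m r]
        ring
      rw [hfrac]
      dsimp only
      have hs1 : (-(x₃^5)⁻¹ : ℂ) = (-1) * (x₃⁻¹)^5 := by rw [← inv_pow]; ring
      rw [hs1]
      have e1 : ((-1 : ℂ) * x₃⁻¹^5)^m = (-1:ℂ)^m * x₃⁻¹^(5*m) := by rw [mul_pow, ← pow_mul]
      have e2 : (x₀/x₃^2 : ℂ)^r = x₀^r * x₃⁻¹^(2*r) := by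
        rw [div_pow, ← pow_mul, div_eq_mul_inv, ← inv_pow]
      have e3 : (x₃⁻¹ : ℂ)^(5*m+2*r) = x₃⁻¹^(5*m) * x₃⁻¹^(2*r) := pow_add _ _ _
      have e4 : (-1 : ℂ)^(5*m+2*r+1) = -((-1:ℂ)^m) := by
        rw [show 5*m+2*r+1 = 2*(2*m+r) + (m+1) by ring, pow_add, pow_mul, neg_one_sq, one_pow,
          one_mul, pow_succ]
        ring
      rw [e1, e2, e3, e4]
      generalize (-1:ℂ)^m = w
      ring

end Stmt5Aux

open Complex Finset Metric Filter Stmt5Aux in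
theorem stmt_5 (ε : ℝ) (hε : ε ∈ Set.Ioo (0 : ℝ) 1) (x₀ x₃ : ℂ)
    (h : ‖x₀‖ * ε ^ 2 + ε⁻¹ + ε ^ 7 + (ε ^ 2)⁻¹ < ‖x₃‖) :
    Summable (fun p : ℕ × ℕ => ‖term5 x₀ x₃ p‖) ∧
    (1 / (2 * (Real.pi : ℂ) * Complex.I) ^ 2) *
        (∮ u in C(0, ε), u⁻¹ *
          ∮ v in C(0, ε),
            v⁻¹ * Complex.log (1 + (x₀ * u * v + v⁻¹ + u ^ 3 * v ^ 4 + u⁻¹ * v⁻¹) / x₃)) =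
      -∑' p : ℕ × ℕ, term5 x₀ x₃ p := by
  obtain ⟨hε0, hε1⟩ := hε
  -- basic positivity facts
  have hρ₀pos : 0 < ‖x₀‖ * ε ^ 2 + ε⁻¹ + ε ^ 7 + (ε ^ 2)⁻¹ := by
    have h1 : 0 ≤ ‖x₀‖ * ε ^ 2 := mul_nonneg (norm_nonneg _) (by positivity)
    have h2 : 0 < ε⁻¹ := inv_pos.2 hε0
    have h3 : 0 ≤ ε ^ 7 := pow_nonneg hε0.le 7
    have h4 : 0 ≤ ((ε:ℝ) ^ 2)⁻¹ := inv_nonneg.2 (by positivity)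
    linarith
  have hx₃pos : 0 < ‖x₃‖ := lt_trans hρ₀pos h
  have hx₃ : x₃ ≠ 0 := by
    intro hc; rw [hc] at hx₃pos; simp at hx₃pos
  set ρ₀ : ℝ := ‖x₀‖ * ε ^ 2 + ε⁻¹ + ε ^ 7 + (ε ^ 2)⁻¹ with hρ₀def
  set ρ : ℝ := ρ₀ / ‖x₃‖ with hρdef
  have hρ0 : 0 ≤ ρ := div_nonneg hρ₀pos.le hx₃pos.le
  have hρ1 : ρ < 1 := (div_lt_one hx₃pos).2 h
  -- the summability part
  have hnormle : ∀ p : ℕ × ℕ, ‖term5 x₀ x₃ p‖ ≤ (ρ^5)^p.1 * (ρ^2)^p.2 := by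
    rintro ⟨m, r⟩
    by_cases hmr : ((m, r) : ℕ × ℕ) = (0, 0)
    · rw [term5, if_pos hmr]
      simp only [norm_zero]
      positivity
    · rw [term5, if_neg hmr]
      have hk0 : 5*m+2*r ≠ 0 := by
        simp only [Prod.mk.injEq] at hmr
        omega
      -- compute the norm
      have hnorm : ‖((5 * m + 2 * r).factorial : ℂ) /
            (((3 * m + r).factorial * r.factorial * (m.factorial) ^ 2 *
              (5 * m + 2 * r) : ℕ) : ℂ) * (-(x₃ ^ 5)⁻¹) ^ m * (x₀ / x₃ ^ 2) ^ r‖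
          = ((5 * m + 2 * r).factorial : ℝ) /
              (((3 * m + r).factorial * r.factorial * (m.factorial) ^ 2 *
                (5 * m + 2 * r) : ℕ) : ℝ) *
              (((‖x₃‖)^5)⁻¹) ^ m * ((‖x₀‖) / (‖x₃‖) ^ 2) ^ r := by
        rw [norm_mul, norm_mul, norm_div, norm_pow, norm_pow, norm_neg, norm_inv, norm_pow,
          norm_div, norm_pow]
        simp only [Complex.norm_natCast]
      rw [hnorm]
      -- the numeric coefficient
      set N' : ℕ := Nat.choose (5*m+2*r) r * Nat.choose (5*m+r) m * Nat.choose (4*m+r) m with hN'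
      have hd0 : ((3*m+r).factorial * r.factorial * (m.factorial)^2 : ℕ) ≠ 0 :=
        mul_ne_zero (mul_ne_zero (3*m+r).factorial_ne_zero r.factorial_ne_zero)
          (pow_ne_zero 2 m.factorial_ne_zero)
      have hcoef : ((5 * m + 2 * r).factorial : ℝ) /
            (((3 * m + r).factorial * r.factorial * (m.factorial) ^ 2 *
              (5 * m + 2 * r) : ℕ) : ℝ) = (N' : ℝ) / (5*m+2*r : ℕ) := by
        rw [div_eq_div_iff]
        · push_cast
          rw [← natfact' m r, hN']
          push_cast
          ring
        · exact Nat.cast_ne_zero.2 (mul_ne_zero hd0 hk0)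
        · exact Nat.cast_ne_zero.2 hk0
      rw [hcoef]
      have hcoef2 : ((N' : ℝ) / (5*m+2*r : ℕ)) ≤ (N' : ℝ) := by
        apply div_le_self (Nat.cast_nonneg _)
        have : 1 ≤ 5*m+2*r := by omega
        exact_mod_cast this
      -- the power part
      have hXY : ((((‖x₃‖)^5)⁻¹) ^ m * ((‖x₀‖) / (‖x₃‖) ^ 2) ^ r)
          = (‖x₀‖)^r * ((‖x₃‖)^(5*m+2*r))⁻¹ := by
        rw [inv_pow, ← pow_mul, div_pow, ← pow_mul, pow_add, mul_inv, div_eq_mul_inv]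
        ring
      have hmain : (N' : ℝ) * (‖x₀‖)^r ≤ ρ₀^(5*m+2*r) := by
        have hεne : (ε:ℝ) ≠ 0 := hε0.ne'
        have hprod : ((‖x₀‖ * ε^2)^r * (ε⁻¹)^m * (ε^7)^m * ((ε^2)⁻¹)^(3*m+r))
            = (‖x₀‖)^r := by
          simp only [mul_pow, inv_pow, ← pow_mul]
          field_simp
          ring
        have := multinom4_le (A := ‖x₀‖ * ε^2) (B := ε⁻¹) (C := ε^7) (D := (ε^2)⁻¹)
          (mul_nonneg (norm_nonneg _) (by positivity)) (inv_nonneg.2 hε0.le)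
          (pow_nonneg hε0.le 7) (inv_nonneg.2 (by positivity)) m r
        calc (N' : ℝ) * (‖x₀‖)^r
            = (N' : ℝ) * ((‖x₀‖ * ε^2)^r * (ε⁻¹)^m * (ε^7)^m * ((ε^2)⁻¹)^(3*m+r)) := by
              rw [hprod]
          _ ≤ (‖x₀‖ * ε^2 + ε⁻¹ + ε^7 + (ε^2)⁻¹)^(5*m+2*r) := by
              have hN2 : (N' : ℝ) = ((Nat.choose (5*m+2*r) r : ℝ)) * (Nat.choose (5*m+r) m : ℝ)
                  * (Nat.choose (4*m+r) m : ℝ) := by rw [hN']; push_cast; ring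
              rw [hN2]
              exact this
          _ = ρ₀^(5*m+2*r) := by rw [hρ₀def]
      calc (N' : ℝ) / ((5*m+2*r : ℕ) : ℝ) * (((‖x₃‖)^5)⁻¹) ^ m
            * ((‖x₀‖) / (‖x₃‖) ^ 2) ^ r
          = ((N' : ℝ) / ((5*m+2*r : ℕ) : ℝ)) * ((((‖x₃‖)^5)⁻¹) ^ m
            * ((‖x₀‖) / (‖x₃‖) ^ 2) ^ r) := by ring
        _ ≤ (N' : ℝ) * ((‖x₀‖)^r * ((‖x₃‖)^(5*m+2*r))⁻¹) := by
            rw [hXY]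
            refine mul_le_mul_of_nonneg_right hcoef2 ?_
            positivity
        _ = ((N' : ℝ) * (‖x₀‖)^r) * ((‖x₃‖)^(5*m+2*r))⁻¹ := by ring
        _ ≤ ρ₀^(5*m+2*r) * ((‖x₃‖)^(5*m+2*r))⁻¹ := by
            refine mul_le_mul_of_nonneg_right hmain ?_
            positivity
        _ = ρ^(5*m+2*r) := by
            rw [hρdef, div_pow, div_eq_mul_inv]
        _ = (ρ^5)^m * (ρ^2)^r := by
            rw [← pow_mul, ← pow_mul, ← pow_add]
  have hsummable : Summable (fun p : ℕ × ℕ => ‖term5 x₀ x₃ p‖) := by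
    refine Summable.of_nonneg_of_le (fun p => norm_nonneg _) hnormle ?_
    exact Summable.mul_of_nonneg
      (summable_geometric_of_lt_one (by positivity) (pow_lt_one₀ hρ0 hρ1 (by norm_num)))
      (summable_geometric_of_lt_one (by positivity) (pow_lt_one₀ hρ0 hρ1 (by norm_num)))
      (fun m => by positivity) (fun r => by positivity)
  refine ⟨hsummable, ?_⟩
  -- bound on f on the torus
  have hsph : ∀ z : ℂ, z ∈ sphere (0:ℂ) ε → ‖z‖ = ε := fun z hz => by
    rwa [mem_sphere_zero_iff_norm] at hz
  have hfb : ∀ u ∈ sphere (0:ℂ) ε, ∀ v ∈ sphere (0:ℂ) ε,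
      ‖(x₀*u*v + v⁻¹ + u^3*v^4 + u⁻¹*v⁻¹)/x₃‖ ≤ ρ := by
    intro u hu v hv
    rw [norm_div, hρdef]
    rw [div_le_div_iff₀ (by exact hx₃pos) hx₃pos]
    have hnum : ‖x₀*u*v + v⁻¹ + u^3*v^4 + u⁻¹*v⁻¹‖ ≤ ρ₀ := by
      have e1 : ‖x₀*u*v‖ = ‖x₀‖ * ε^2 := by
        rw [norm_mul, norm_mul, hsph u hu, hsph v hv]
        ring
      have e2 : ‖(v⁻¹ : ℂ)‖ = ε⁻¹ := by rw [norm_inv, hsph v hv]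
      have e3 : ‖u^3*v^4‖ = ε^7 := by
        rw [norm_mul, norm_pow, norm_pow, hsph u hu, hsph v hv, ← pow_add]
      have e4 : ‖u⁻¹*v⁻¹‖ = (ε^2)⁻¹ := by
        rw [norm_mul, norm_inv, norm_inv, hsph u hu, hsph v hv, ← mul_inv, ← pow_two]
      calc ‖x₀*u*v + v⁻¹ + u^3*v^4 + u⁻¹*v⁻¹‖
          ≤ ‖x₀*u*v + v⁻¹ + u^3*v^4‖ + ‖u⁻¹*v⁻¹‖ := norm_add_le _ _
        _ ≤ (‖x₀*u*v + v⁻¹‖ + ‖u^3*v^4‖) + ‖u⁻¹*v⁻¹‖ := by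
            gcongr; exact norm_add_le _ _
        _ ≤ ((‖x₀*u*v‖ + ‖v⁻¹‖) + ‖u^3*v^4‖) + ‖u⁻¹*v⁻¹‖ := by
            gcongr; exact norm_add_le _ _
        _ = ρ₀ := by rw [e1, e2, e3, e4, hρ₀def]
    calc ‖x₀*u*v + v⁻¹ + u^3*v^4 + u⁻¹*v⁻¹‖ * ‖x₃‖
        ≤ ρ₀ * ‖x₃‖ := by
          refine mul_le_mul_of_nonneg_right hnum hx₃pos.le
      _ = ρ₀ * ‖x₃‖ := by rfl
  -- norm bound on the log-series terms
  have hb : ∀ (w : ℂ), ‖w‖ ≤ ρ → ∀ k : ℕ, ‖(-1:ℂ)^(k+1) * w^k / (k:ℂ)‖ ≤ ρ^k := by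
    intro w hw k
    rw [norm_div, norm_mul, norm_pow, norm_pow, norm_neg, norm_one, one_pow, one_mul]
    rcases Nat.eq_zero_or_pos k with rfl | hk
    · simp
    · calc ‖w‖^k / ‖((k:ℕ):ℂ)‖ ≤ ‖w‖^k := by
            refine div_le_self (pow_nonneg (norm_nonneg _) _) ?_
            rw [Complex.norm_natCast]
            exact_mod_cast hk
        _ ≤ ρ^k := pow_le_pow_left₀ (norm_nonneg _) hw k
  -- continuity of f in v for u on the sphere (and vice versa symmetrically is not needed)
  have hinv : ContinuousOn (fun z : ℂ => z⁻¹) (sphere (0:ℂ) ε) :=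
    continuousOn_id.inv₀ (fun z hz => sphere_ne_zero hε0 hz)
  have hfcont : ∀ u : ℂ, ContinuousOn
      (fun v : ℂ => (x₀*u*v + v⁻¹ + u^3*v^4 + u⁻¹*v⁻¹)/x₃) (sphere (0:ℂ) ε) := by
    intro u
    refine ContinuousOn.div_const ?_ _
    refine ContinuousOn.add (ContinuousOn.add (ContinuousOn.add ?_ hinv) ?_) ?_
    · exact continuousOn_const.mul continuousOn_id
    · exact continuousOn_const.mul (continuousOn_pow 4)
    · exact continuousOn_const.mul hinv
  -- inner interchange: for each u on the sphere
  have hinner : ∀ u ∈ sphere (0:ℂ) ε,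
      HasSum (fun k : ℕ => ((-1:ℂ)^(k+1)/(k:ℂ)) * S5 x₀ x₃ k u)
        (∮ v in C(0, ε), v⁻¹ *
          Complex.log (1 + (x₀ * u * v + v⁻¹ + u ^ 3 * v ^ 4 + u⁻¹ * v⁻¹) / x₃)) := by
    intro u hu
    have hu0 := sphere_ne_zero hε0 hu
    have hswap := hasSum_circleIntegral (R := ε) (C := ε⁻¹) (ρ := ρ)
      (F := fun k v => v⁻¹ * ((-1:ℂ)^(k+1) * ((x₀*u*v + v⁻¹ + u^3*v^4 + u⁻¹*v⁻¹)/x₃)^k / (k:ℂ)))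
      (G := fun v => v⁻¹ *
        Complex.log (1 + (x₀ * u * v + v⁻¹ + u ^ 3 * v ^ 4 + u⁻¹ * v⁻¹) / x₃))
      hε0 ?_ hρ0 hρ1 ?_ ?_
    · have heq : (fun k : ℕ => ∮ v in C(0, ε),
          v⁻¹ * ((-1:ℂ)^(k+1) * ((x₀*u*v + v⁻¹ + u^3*v^4 + u⁻¹*v⁻¹)/x₃)^k / (k:ℂ)))
          = fun k : ℕ => ((-1:ℂ)^(k+1)/(k:ℂ)) * S5 x₀ x₃ k u := by
        funext k
        have hptw : (fun v : ℂ =>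
            v⁻¹ * ((-1:ℂ)^(k+1) * ((x₀*u*v + v⁻¹ + u^3*v^4 + u⁻¹*v⁻¹)/x₃)^k / (k:ℂ)))
            = fun v : ℂ => ((-1:ℂ)^(k+1)/(k:ℂ)) *
                (v⁻¹ * ((x₀*u*v + v⁻¹ + u^3*v^4 + u⁻¹*v⁻¹)/x₃)^k) := by
          funext v; ring
        rw [hptw, circleIntegral.integral_const_mul, inner_eval x₀ x₃ hx₃ hε0 k hu0]
      rwa [heq] at hswap
    · intro k
      refine ContinuousOn.mul hinv ?_
      exact ContinuousOn.div_const (continuousOn_const.mul ((hfcont u).pow k)) _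
    · intro k v hv
      rw [norm_mul, norm_inv, hsph v hv]
      exact mul_le_mul_of_nonneg_left (hb _ (hfb u hu v hv) k) (inv_nonneg.2 hε0.le)
    · intro v hv
      have hlt : ‖(x₀*u*v + v⁻¹ + u^3*v^4 + u⁻¹*v⁻¹)/x₃‖ < 1 := lt_of_le_of_lt (hfb u hu v hv) hρ1
      exact (Complex.hasSum_taylorSeries_log hlt).mul_left v⁻¹
  -- bound for the outer interchange
  have houterbound : ∀ (k : ℕ), ∀ u ∈ sphere (0:ℂ) ε,
      ‖((-1:ℂ)^(k+1)/(k:ℂ)) * S5 x₀ x₃ k u‖ ≤ 2 * Real.pi * ρ^k := by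
    intro k u hu
    have hu0 := sphere_ne_zero hε0 hu
    have heq : ((-1:ℂ)^(k+1)/(k:ℂ)) * S5 x₀ x₃ k u
        = ∮ v in C(0, ε), v⁻¹ * ((-1:ℂ)^(k+1) *
            ((x₀*u*v + v⁻¹ + u^3*v^4 + u⁻¹*v⁻¹)/x₃)^k / (k:ℂ)) := by
      have hptw : (fun v : ℂ =>
          v⁻¹ * ((-1:ℂ)^(k+1) * ((x₀*u*v + v⁻¹ + u^3*v^4 + u⁻¹*v⁻¹)/x₃)^k / (k:ℂ)))
          = fun v : ℂ => ((-1:ℂ)^(k+1)/(k:ℂ)) *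
              (v⁻¹ * ((x₀*u*v + v⁻¹ + u^3*v^4 + u⁻¹*v⁻¹)/x₃)^k) := by
        funext v; ring
      rw [hptw, circleIntegral.integral_const_mul, inner_eval x₀ x₃ hx₃ hε0 k hu0]
    rw [heq]
    have := circleIntegral.norm_integral_le_of_norm_le_const (c := (0:ℂ)) (R := ε)
      (C := ε⁻¹ * ρ^k)
      (f := fun v => v⁻¹ * ((-1:ℂ)^(k+1) * ((x₀*u*v + v⁻¹ + u^3*v^4 + u⁻¹*v⁻¹)/x₃)^k / (k:ℂ)))
      hε0.le ?_
    · calc ‖∮ v in C(0, ε), v⁻¹ * ((-1:ℂ)^(k+1) *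
            ((x₀*u*v + v⁻¹ + u^3*v^4 + u⁻¹*v⁻¹)/x₃)^k / (k:ℂ))‖
          ≤ 2 * Real.pi * ε * (ε⁻¹ * ρ^k) := this
        _ = 2 * Real.pi * (ε * ε⁻¹) * ρ^k := by ring
        _ = 2 * Real.pi * ρ^k := by rw [mul_inv_cancel₀ hε0.ne', mul_one]
    · intro v hv
      rw [norm_mul, norm_inv, hsph v hv]
      exact mul_le_mul_of_nonneg_left (hb _ (hfb u hu v hv) k) (inv_nonneg.2 hε0.le)
  -- continuity of the outer integrands
  have hS5cont : ∀ k : ℕ, ContinuousOn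
      (fun u : ℂ => u⁻¹ * (((-1:ℂ)^(k+1)/(k:ℂ)) * S5 x₀ x₃ k u)) (sphere (0:ℂ) ε) := by
    intro k
    refine hinv.mul (continuousOn_const.mul ?_)
    refine contOn_sum _ fun j _ => contOn_sum _ fun m _ => contOn_sum _ fun i _ => ?_
    exact (continuousOn_const.mul (contOn_zpow hε0 _)).mul continuousOn_const
  -- the outer interchange
  have houter := hasSum_circleIntegral (R := ε) (C := ε⁻¹ * (2 * Real.pi)) (ρ := ρ)
    (F := fun k u => u⁻¹ * (((-1:ℂ)^(k+1)/(k:ℂ)) * S5 x₀ x₃ k u))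
    (G := fun u => u⁻¹ * ∮ v in C(0, ε),
        v⁻¹ * Complex.log (1 + (x₀ * u * v + v⁻¹ + u ^ 3 * v ^ 4 + u⁻¹ * v⁻¹) / x₃))
    hε0 hS5cont hρ0 hρ1 ?_ ?_
  rotate_left
  · intro k u hu
    rw [norm_mul, norm_inv, hsph u hu]
    calc ε⁻¹ * ‖((-1:ℂ)^(k+1)/(k:ℂ)) * S5 x₀ x₃ k u‖
        ≤ ε⁻¹ * (2 * Real.pi * ρ^k) :=
          mul_le_mul_of_nonneg_left (houterbound k u hu) (inv_nonneg.2 hε0.le)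
      _ = ε⁻¹ * (2 * Real.pi) * ρ^k := by ring
  · intro u hu
    exact (hinner u hu).mul_left u⁻¹
  -- evaluate the outer integrals
  have heval : (fun k : ℕ => ∮ u in C(0, ε),
      u⁻¹ * (((-1:ℂ)^(k+1)/(k:ℂ)) * S5 x₀ x₃ k u))
      = fun k : ℕ => -(2*(Real.pi:ℂ)*Complex.I)^2 * ∑ p ∈ A5 k, term5 x₀ x₃ p := by
    funext k
    rw [outer_eval x₀ x₃ _ hε0 k, stepE x₀ x₃ k]
  rw [heval] at houter
  -- now regroup the sums
  set c : ℂ := 2*(Real.pi:ℂ)*Complex.I with hcdef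
  have hc : c ≠ 0 := by
    rw [hcdef]
    refine mul_ne_zero (mul_ne_zero two_ne_zero ?_) Complex.I_ne_zero
    exact_mod_cast Real.pi_ne_zero
  have hc2 : (-(c^2)) ≠ 0 := neg_ne_zero.2 (pow_ne_zero 2 hc)
  set DI : ℂ := (∮ u in C(0, ε), u⁻¹ *
      ∮ v in C(0, ε),
        v⁻¹ * Complex.log (1 + (x₀ * u * v + v⁻¹ + u ^ 3 * v ^ 4 + u⁻¹ * v⁻¹) / x₃)) with hDIdef
  have hB : HasSum (fun k : ℕ => ∑ p ∈ A5 k, term5 x₀ x₃ p) ((-(c^2))⁻¹ * DI) := by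
    have h1 := houter.mul_left ((-(c^2))⁻¹)
    have h2 : (fun k : ℕ => (-(c^2))⁻¹ * (-(c^2) * ∑ p ∈ A5 k, term5 x₀ x₃ p))
        = fun k : ℕ => ∑ p ∈ A5 k, term5 x₀ x₃ p := by
      funext k
      rw [← mul_assoc, inv_mul_cancel₀ hc2, one_mul]
    rwa [h2] at h1
  have hTsum : HasSum (fun p : ℕ × ℕ => term5 x₀ x₃ p) (∑' p : ℕ × ℕ, term5 x₀ x₃ p) :=
    (hsummable.of_norm).hasSum
  -- exhaustion of ℕ × ℕ by the sets U n
  set U : ℕ → Finset (ℕ × ℕ) := fun n => (range (n+1)).biUnion A5 with hUdef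
  have hUmono : Monotone U := by
    intro a b hab
    exact Finset.biUnion_subset_biUnion_of_subset_left _
      (Finset.range_subset_range.2 (by omega))
  have hUexh : ∀ p : ℕ × ℕ, ∃ n, p ∈ U n := by
    intro p
    refine ⟨5*p.1+2*p.2, Finset.mem_biUnion.2 ⟨5*p.1+2*p.2, ?_, ?_⟩⟩
    · exact Finset.mem_range.2 (by omega)
    · refine Finset.mem_filter.2 ⟨Finset.mem_product.2 ⟨?_, ?_⟩, rfl⟩ <;>
        exact Finset.mem_range.2 (by omega)
  have hU : Tendsto U atTop atTop :=
    tendsto_atTop_finset_of_monotone hUmono hUexh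
  have hdisj : ∀ n : ℕ, ((range (n+1) : Finset ℕ) : Set ℕ).PairwiseDisjoint A5 := by
    intro n k₁ _ k₂ _ hne
    have hdd : ∀ p : ℕ × ℕ, p ∈ A5 k₁ → p ∉ A5 k₂ := by
      intro p hp1 hp2
      simp only [A5, Finset.mem_filter, Finset.mem_product, Finset.mem_range] at hp1 hp2
      exact hne (by omega)
    exact Finset.disjoint_left.2 fun {p} hp1 hp2 => hdd p hp1 hp2
  have hUsum : ∀ n : ℕ, ∑ p ∈ U n, term5 x₀ x₃ p
      = ∑ k ∈ range (n+1), ∑ p ∈ A5 k, term5 x₀ x₃ p := fun n =>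
    Finset.sum_biUnion (hdisj n)
  have h1 : Tendsto (fun n => ∑ p ∈ U n, term5 x₀ x₃ p) atTop
      (nhds (∑' p : ℕ × ℕ, term5 x₀ x₃ p)) := hTsum.comp hU
  have h3 : Tendsto (fun n => ∑ k ∈ range (n+1), ∑ p ∈ A5 k, term5 x₀ x₃ p) atTop
      (nhds ((-(c^2))⁻¹ * DI)) := by
    have := hB.tendsto_sum_nat.comp (tendsto_add_atTop_nat 1)
    simpa [Function.comp_def] using this
  have hTeq : (∑' p : ℕ × ℕ, term5 x₀ x₃ p) = (-(c^2))⁻¹ * DI := by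
    refine tendsto_nhds_unique ?_ h3
    have : (fun n => ∑ p ∈ U n, term5 x₀ x₃ p)
        = fun n => ∑ k ∈ range (n+1), ∑ p ∈ A5 k, term5 x₀ x₃ p := funext hUsum
    rwa [this] at h1
  rw [hTeq]
  rw [show -((-(c^2))⁻¹ * DI) = (1 / c^2) * DI by
    rw [inv_neg, one_div]
    ring]
end

section
/- D₂(x) = 0 for every real number x (viewed as an element of ℂ). In particular, with the principal-branch conventions, the term arg(1−x)·log|x| exactly cancels Im(Li₂(x)) also for x ∈ (1,∞), where Im(Li₂(x)) = −π·log x. -/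
open Set MeasureTheory intervalIntegral

/-- The dilogarithm Li₂(z) = −∫₀¹ Log(1−z·t)/t dt, with the principal branch Log. -/
noncomputable def Li2 (z : ℂ) : ℂ :=
  -∫ t in (0 : ℝ)..(1 : ℝ), Complex.log (1 - z * (t : ℂ)) / (t : ℂ)

/-- The Bloch–Wigner function D₂(z) = Im(Li₂(z)) + arg(1−z)·log|z|. -/
noncomputable def D2 (z : ℂ) : ℝ :=
  (Li2 z).im + Complex.arg (1 - z) * Real.log ‖z‖

lemma complexLog_def (z : ℂ) :
    Complex.log z = (Real.log ‖z‖ : ℂ) + (Complex.arg z : ℂ) * Complex.I := rfl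

lemma integrableOn_log_right (c b : ℝ) (hcb : c ≤ b) (h1 : b - c ≤ 1) :
    IntegrableOn (fun t => Real.log (t - c)) (Ioc c b) := by
  have key : IntegrableOn (fun t => -Real.log (t - c)) (Ioc c b) := by
    apply integrableOn_deriv_of_nonneg (g := fun t => (t - c) - (t - c) * Real.log (t - c))
    · exact ((continuous_id.sub Real.continuous_mul_log).comp
        (continuous_id.sub continuous_const)).continuousOn
    · intro t ht
      have hv : t - c ≠ 0 := by have := ht.1; intro h; linarith [sub_eq_zero.mp h]
      have h1 : HasDerivAt (fun v : ℝ => v - v * Real.log v)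
          (1 - (Real.log (t - c) + 1)) (t - c) :=
        (hasDerivAt_id _).sub (Real.hasDerivAt_mul_log hv)
      have h2 : HasDerivAt (fun t : ℝ => t - c) 1 t := (hasDerivAt_id t).sub_const c
      have := h1.comp t h2
      exact this.congr_deriv (by ring)
    · intro t ht
      have h0 : 0 ≤ t - c := by linarith [ht.1]
      have h1 : t - c ≤ 1 := by linarith [ht.2]
      simpa using Real.log_nonpos h0 h1
  have key2 : IntegrableOn (fun t => -(-Real.log (t - c))) (Ioc c b) := key.neg
  simpa only [neg_neg] using key2

lemma integrableOn_log_left (a c : ℝ) (hac : a ≤ c) (h1 : c - a ≤ 1) :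
    IntegrableOn (fun t => Real.log (c - t)) (Ioc a c) := by
  have key : IntegrableOn (fun t => -Real.log (c - t)) (Ioc a c) := by
    apply integrableOn_deriv_of_nonneg (g := fun t => (c - t) * Real.log (c - t) - (c - t))
    · exact ((Real.continuous_mul_log.sub continuous_id).comp
        (continuous_const.sub continuous_id)).continuousOn
    · intro t ht
      have hv : c - t ≠ 0 := by have := ht.2; intro h; linarith [sub_eq_zero.mp h]
      have h1 : HasDerivAt (fun v : ℝ => v * Real.log v - v)
          ((Real.log (c - t) + 1) - 1) (c - t) :=
        (Real.hasDerivAt_mul_log hv).sub (hasDerivAt_id _)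
      have h2 : HasDerivAt (fun t : ℝ => c - t) (-1) t := by
        simpa using (hasDerivAt_id t).const_sub c
      have := h1.comp t h2
      exact this.congr_deriv (by ring)
    · intro t ht
      have h0 : 0 ≤ c - t := by linarith [ht.2]
      have h1 : c - t ≤ 1 := by linarith [ht.1]
      simpa using Real.log_nonpos h0 h1
  have key2 : IntegrableOn (fun t => -(-Real.log (c - t))) (Ioc a c) := key.neg
  simpa only [neg_neg] using key2

lemma integrableOn_log_abs_sub (a b c : ℝ) (hac : a ≤ c) (hcb : c ≤ b)
    (h1 : c - a ≤ 1) (h2 : b - c ≤ 1) :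
    IntegrableOn (fun t => Real.log |t - c|) (Ioc a b) := by
  rw [← Ioc_union_Ioc_eq_Ioc hac hcb]
  apply IntegrableOn.union
  · refine (integrableOn_log_left a c hac h1).congr_fun (fun t ht => ?_) measurableSet_Ioc
    rw [abs_sub_comm, abs_of_nonneg (by linarith [ht.2])]
  · refine (integrableOn_log_right c b hcb h2).congr_fun (fun t ht => ?_) measurableSet_Ioc
    rw [abs_of_nonneg (by linarith [ht.1])]

theorem stmt_13 :
    (∀ x : ℝ, D2 (x : ℂ) = 0) ∧
    (∀ x : ℝ, 1 < x → (Li2 (x : ℂ)).im = -Real.pi * Real.log x) := by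
  -- the key computation for x > 1
  have key : ∀ x : ℝ, 1 < x → (Li2 (x : ℂ)).im = -Real.pi * Real.log x := by
    intro x hx
    have hx0 : (0:ℝ) < x := by linarith
    set c : ℝ := x⁻¹ with hc_def
    set d : ℝ := c / 2 with hd_def
    have hc : 0 < c := by positivity
    have hc1 : c < 1 := by rw [hc_def, inv_lt_one_iff₀]; right; exact hx
    have hxc : x * c = 1 := mul_inv_cancel₀ hx0.ne'
    have hd : 0 < d := by positivity
    have hdc : d < c := by rw [hd_def]; linarith
    have hxd : x * d = 1 / 2 := by rw [hd_def, ← mul_div_assoc, hxc]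
    set g : ℝ → ℝ := fun t => Real.log |1 - x * t| / t with hg_def
    set h : ℝ → ℝ := fun t => Complex.arg ((1 - x * t : ℝ) : ℂ) / t with hh_def
    -- integrability of g on (0, d]
    have Hg1 : IntegrableOn g (Ioc 0 d) := by
      have hmeas : AEStronglyMeasurable g (volume.restrict (Ioc 0 d)) :=
        ((Real.measurable_log.comp
          (measurable_const.sub (measurable_id.const_mul x)).abs).div
          measurable_id).aestronglyMeasurable
      apply Integrable.mono' (integrable_const (2 * x)) hmeas
      rw [ae_restrict_iff' measurableSet_Ioc]
      refine Filter.Eventually.of_forall fun t ht => ?_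
      obtain ⟨ht0, htd⟩ := ht
      have hxt : x * t ≤ 1 / 2 := by
        calc x * t ≤ x * d := by nlinarith
        _ = 1 / 2 := hxd
      have hxt0 : 0 ≤ x * t := by positivity
      have h1 : (0:ℝ) < 1 - x * t := by linarith
      have hlog : -Real.log (1 - x * t) ≤ 2 * (x * t) := by
        have h3 := Real.log_le_sub_one_of_pos (inv_pos.mpr h1)
        rw [Real.log_inv] at h3
        have h5 : (1 - x * t)⁻¹ ≤ 1 + 2 * (x * t) := by
          rw [inv_eq_one_div, div_le_iff₀ h1]; nlinarith
        linarith
      have hlogle : Real.log (1 - x * t) ≤ 0 :=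
        Real.log_nonpos (by linarith) (by linarith)
      show ‖Real.log |1 - x * t| / t‖ ≤ 2 * x
      rw [abs_of_pos h1, Real.norm_eq_abs, abs_div, abs_of_pos ht0,
        abs_of_nonpos hlogle, div_le_iff₀ ht0]
      nlinarith
    -- integrability of g on (d, 1]
    have Hlogc : IntegrableOn (fun t => Real.log x + Real.log |t - c|) (Ioc d 1) := by
      refine ((integrableOn_const_iff).mpr (Or.inr ?_)).add
        (integrableOn_log_abs_sub d 1 c hdc.le hc1.le (by linarith) (by linarith))
      exact measure_Ioc_lt_top
    have Hg2 : IntegrableOn g (Ioc d 1) := by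
      have Hpsi : IntegrableOn
          (fun t => (1 / t) • (Real.log x + Real.log |t - c|)) (Ioc d 1) := by
        have := ((integrableOn_Icc_iff_integrableOn_Ioc).mpr Hlogc).continuousOn_smul
          (f := fun t : ℝ => 1 / t)
          (continuousOn_const.div continuousOn_id fun t ht =>
            (lt_of_lt_of_le hd ht.1).ne') isCompact_Icc
        exact this.mono_set Ioc_subset_Icc_self
      apply Hpsi.congr
      have hsub : {t : ℝ | ¬ ((1 / t) • (Real.log x + Real.log |t - c|) = g t)} ⊆ {c} := by
        intro t ht
        simp only [mem_setOf_eq] at ht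
        by_contra htc
        apply ht
        have htc' : t ≠ c := htc
        have habs : |1 - x * t| = x * |t - c| := by
          have : 1 - x * t = x * (c - t) := by rw [mul_sub, hxc]
          rw [this, abs_mul, abs_of_pos hx0, abs_sub_comm]
        rw [hg_def]
        simp only
        rw [habs, Real.log_mul hx0.ne' (by simpa [abs_eq_zero, sub_eq_zero] using htc'),
          smul_eq_mul]
        ring
      have hae : ∀ᵐ t ∂(volume : Measure ℝ),
          (1 / t) • (Real.log x + Real.log |t - c|) = g t :=
        ae_iff.mpr (measure_mono_null hsub Real.volume_singleton)
      exact ae_restrict_of_ae hae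
    have Hg : IntervalIntegrable g volume 0 1 := by
      rw [intervalIntegrable_iff_integrableOn_Ioc_of_le zero_le_one,
        ← Ioc_union_Ioc_eq_Ioc hd.le (by linarith : d ≤ 1)]
      exact Hg1.union Hg2
    -- integrability of h
    have Hh1 : IntegrableOn h (Ioc 0 c) := by
      refine integrableOn_zero.congr_fun (fun t ht => ?_) measurableSet_Ioc
      have : 0 ≤ 1 - x * t := by nlinarith [ht.1, ht.2]
      show (0:ℝ) = Complex.arg ((1 - x * t : ℝ) : ℂ) / t
      rw [Complex.arg_ofReal_of_nonneg this, zero_div]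
    have Hh2 : IntegrableOn h (Ioc c 1) := by
      have hcont : IntegrableOn (fun t : ℝ => Real.pi / t) (Ioc c 1) := by
        refine ((continuousOn_const.div continuousOn_id fun t ht => ?_).integrableOn_Icc).mono_set
          Ioc_subset_Icc_self
        exact (lt_of_lt_of_le hc ht.1).ne'
      refine hcont.congr_fun (fun t ht => ?_) measurableSet_Ioc
      have : 1 - x * t < 0 := by nlinarith [ht.1]
      show Real.pi / t = Complex.arg ((1 - x * t : ℝ) : ℂ) / t
      rw [Complex.arg_ofReal_of_neg this]
    have Hh : IntervalIntegrable h volume 0 1 := by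
      rw [intervalIntegrable_iff_integrableOn_Ioc_of_le zero_le_one,
        ← Ioc_union_Ioc_eq_Ioc hc.le hc1.le]
      exact Hh1.union Hh2
    -- pointwise decomposition
    have key : ∀ t : ℝ, Complex.log (1 - (x:ℂ) * t) / t =
        ((g t : ℝ) : ℂ) + ((h t : ℝ) : ℂ) * Complex.I := by
      intro t
      have hcast : (1 : ℂ) - (x:ℂ) * (t:ℂ) = ((1 - x * t : ℝ) : ℂ) := by push_cast; ring
      rw [hcast, complexLog_def, Complex.norm_real, Real.norm_eq_abs, hg_def, hh_def]
      simp only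
      rw [Complex.ofReal_div, Complex.ofReal_div]
      ring
    -- integrability of complex pieces
    have Hgc : IntervalIntegrable (fun t : ℝ => ((g t : ℝ) : ℂ)) volume 0 1 :=
      ⟨Hg.1.ofReal, Hg.2.ofReal⟩
    have Hhc : IntervalIntegrable (fun t : ℝ => ((h t : ℝ) : ℂ) * Complex.I) volume 0 1 :=
      ⟨Hh.1.ofReal.mul_const _, Hh.2.ofReal.mul_const _⟩
    -- the main computation
    have hint : (∫ t in (0:ℝ)..1, Complex.log (1 - (x:ℂ) * t) / t) =
        ((∫ t in (0:ℝ)..1, g t : ℝ) : ℂ) + ((∫ t in (0:ℝ)..1, h t : ℝ) : ℂ) * Complex.I := by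
      rw [show (∫ t in (0:ℝ)..1, Complex.log (1 - (x:ℂ) * t) / t) =
          ∫ t in (0:ℝ)..1, (((g t : ℝ) : ℂ) + ((h t : ℝ) : ℂ) * Complex.I) from
        intervalIntegral.integral_congr fun t _ => key t]
      rw [intervalIntegral.integral_add Hgc Hhc, intervalIntegral.integral_mul_const,
        intervalIntegral.integral_ofReal, intervalIntegral.integral_ofReal]
    -- compute ∫ h
    have hinth : (∫ t in (0:ℝ)..1, h t) = Real.pi * Real.log x := by
      have i1 : IntervalIntegrable h volume 0 c :=
        (intervalIntegrable_iff_integrableOn_Ioc_of_le hc.le).mpr Hh1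
      have i2 : IntervalIntegrable h volume c 1 :=
        (intervalIntegrable_iff_integrableOn_Ioc_of_le hc1.le).mpr Hh2
      rw [← intervalIntegral.integral_add_adjacent_intervals i1 i2]
      have e1 : (∫ t in (0:ℝ)..c, h t) = 0 := by
        rw [show (∫ t in (0:ℝ)..c, h t) = ∫ t in (0:ℝ)..c, (0:ℝ) from
          intervalIntegral.integral_congr fun t ht => ?_]
        · simp
        · rw [uIcc_of_le hc.le] at ht
          have : 0 ≤ 1 - x * t := by nlinarith [ht.1, ht.2]
          show Complex.arg ((1 - x * t : ℝ) : ℂ) / t = 0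
          rw [Complex.arg_ofReal_of_nonneg this, zero_div]
      have e2 : (∫ t in c..1, h t) = Real.pi * Real.log x := by
        rw [show (∫ t in c..1, h t) = ∫ t in c..1, Real.pi * t⁻¹ from
          intervalIntegral.integral_congr_ae (Filter.Eventually.of_forall fun t ht => ?_)]
        · rw [intervalIntegral.integral_const_mul, integral_inv (by
            rw [uIcc_of_le hc1.le]
            rintro ⟨h1, -⟩; linarith)]
          rw [one_div, hc_def, inv_inv]
        · rw [uIoc_of_le hc1.le] at ht
          have : 1 - x * t < 0 := by nlinarith [ht.1]
          show Complex.arg ((1 - x * t : ℝ) : ℂ) / t = Real.pi * t⁻¹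
          rw [Complex.arg_ofReal_of_neg this, div_eq_mul_inv]
      rw [e1, e2, zero_add]
    -- conclude
    show (-∫ t in (0:ℝ)..1, Complex.log (1 - (x:ℂ) * t) / t).im = _
    rw [Complex.neg_im, hint]
    simp [hinth]
  refine ⟨fun x => ?_, key⟩
  rcases le_or_gt x 1 with hx | hx
  · -- x ≤ 1 : the integrand is real-valued
    have him : (Li2 (x : ℂ)).im = 0 := by
      have heq : (∫ t in (0:ℝ)..1, Complex.log (1 - (x:ℂ) * t) / t) =
          ((∫ t in (0:ℝ)..1, Real.log (1 - x * t) / t : ℝ) : ℂ) := by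
        rw [← intervalIntegral.integral_ofReal]
        apply intervalIntegral.integral_congr
        intro t ht
        rw [uIcc_of_le zero_le_one] at ht
        have hnn : 0 ≤ 1 - x * t := by nlinarith [ht.1, ht.2]
        have hcast : (1 : ℂ) - (x:ℂ) * (t:ℂ) = ((1 - x * t : ℝ) : ℂ) := by push_cast; ring
        show Complex.log (1 - (x:ℂ) * t) / t = ((Real.log (1 - x * t) / t : ℝ) : ℂ)
        rw [Complex.ofReal_div, hcast, Complex.ofReal_log hnn]
      show (-∫ t in (0:ℝ)..1, Complex.log (1 - (x:ℂ) * t) / t).im = 0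
      rw [Complex.neg_im, heq]
      simp
    have harg : Complex.arg (1 - (x:ℂ)) = 0 := by
      rw [show (1 : ℂ) - (x:ℂ) = ((1 - x : ℝ) : ℂ) by push_cast; ring]
      exact Complex.arg_ofReal_of_nonneg (by linarith)
    rw [D2, him, harg]
    ring
  · -- x > 1
    have hx0 : (0:ℝ) < x := by linarith
    have harg : Complex.arg (1 - (x:ℂ)) = Real.pi := by
      rw [show (1 : ℂ) - (x:ℂ) = ((1 - x : ℝ) : ℂ) by push_cast; ring]
      exact Complex.arg_ofReal_of_neg (by linarith)
    rw [D2, key x hx, harg, Complex.norm_real, Real.norm_eq_abs, abs_of_pos hx0]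
    ring
end
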